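/- The modified ER algorithm (equivalently, the importance discounting and combination scheme) satisfies the incompleteness axiom: let H = {H_1,…,H_N} with N ≥ 2, let the L ≥ 2 assessments have belief degrees β_{n,i} ≥ 0 with Σ_n β_{n,i} ≤ 1 and normalized weights w_i with 0 < w_i < 1 and Σ_{i=1}^L w_i = 1, and suppose some assessment i_0 is incomplete, i.e. Σ_{n=1}^N β_{n,i_0} < 1. If at every step of the iterated extended Dempster combination of the importance-discounted IBBAs w_i ⊙ m_i the conflict is strictly less than 1, then the final Ω-mass is strictly less than 1 and the normalized belief degree β_H (the normalized mass assigned to the whole frame H) is strictly positive; i.e. the aggregated assessment is also incomplete. -/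
import Mathlib


open Finset

/-- A basic belief assignment (BBA) on a finite nonempty frame `Θ`. -/
def IsBBA {Θ : Type*} [Fintype Θ] [DecidableEq Θ] (m : Finset Θ → ℝ) : Prop :=
  m ∅ = 0 ∧ (∀ A, 0 ≤ m A) ∧ ∑ A : Finset Θ, m A = 1

/-- Shafer's reliability discounting of `m` by the reliability factor `α`. -/
def rdiscount {Θ : Type*} [Fintype Θ] [DecidableEq Θ] (α : ℝ) (m : Finset Θ → ℝ) :
    Finset Θ → ℝ :=
  fun A => if A = Finset.univ then α * m A + (1 - α) else α * m A

/-- The conflict between two mass functions. -/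
def conflict {Θ : Type*} [Fintype Θ] [DecidableEq Θ] (m1 m2 : Finset Θ → ℝ) : ℝ :=
  ∑ B : Finset Θ, ∑ C : Finset Θ, if B ∩ C = ∅ then m1 B * m2 C else 0

/-- Dempster's rule of combination. -/
noncomputable def dempster {Θ : Type*} [Fintype Θ] [DecidableEq Θ] (m1 m2 : Finset Θ → ℝ) :
    Finset Θ → ℝ :=
  fun A => if A = ∅ then 0
    else (∑ B : Finset Θ, ∑ C : Finset Θ, if B ∩ C = A then m1 B * m2 C else 0) /
      (1 - conflict m1 m2)

/-- Iterated Dempster combination of `d 0, …, d i`. -/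
noncomputable def combUpTo {Θ : Type*} [Fintype Θ] [DecidableEq Θ] (d : ℕ → Finset Θ → ℝ) :
    ℕ → Finset Θ → ℝ
  | 0 => d 0
  | i + 1 => dempster (combUpTo d (i)) (d (i + 1))

/-- The assessment BBA on the frame `{H_1,…,H_N}` determined by belief degrees `β`. -/
def assessBBA {N : ℕ} (β : Fin N → ℝ) : Finset (Fin N) → ℝ :=
  fun A => if A = Finset.univ then 1 - ∑ n, β n
    else ∑ n : Fin N, if A = {n} then β n else 0

/-- An importance basic belief assignment (IBBA): `ω` is the mass on the
indecisiveness element `Ω`. -/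
def IsIBBA {Θ : Type*} [Fintype Θ] [DecidableEq Θ] (m : Finset Θ → ℝ) (ω : ℝ) : Prop :=
  m ∅ = 0 ∧ (∀ A, 0 ≤ m A) ∧ 0 ≤ ω ∧ (∑ A : Finset Θ, m A) + ω = 1

/-- Importance discounting of a BBA `m` by the importance factor `β`. -/
def impDiscount {Θ : Type*} [Fintype Θ] [DecidableEq Θ] (β : ℝ) (m : Finset Θ → ℝ) :
    (Finset Θ → ℝ) × ℝ :=
  (fun A => β * m A, 1 - β)

/-- The extended Dempster rule of combination of two IBBAs. -/
noncomputable def edComb {Θ : Type*} [Fintype Θ] [DecidableEq Θ]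
    (p q : (Finset Θ → ℝ) × ℝ) : (Finset Θ → ℝ) × ℝ :=
  (fun A => if A = ∅ then 0
      else (1 - conflict p.1 q.1)⁻¹ *
        ((∑ B : Finset Θ, ∑ C : Finset Θ, if B ∩ C = A then p.1 B * q.1 C else 0) +
          p.1 A * q.2 + p.2 * q.1 A),
    (1 - conflict p.1 q.1)⁻¹ * (p.2 * q.2))

/-- Iterated extended Dempster combination of `d 0, …, d i`. -/
noncomputable def edCombUpTo {Θ : Type*} [Fintype Θ] [DecidableEq Θ] (d : ℕ → (Finset Θ → ℝ) × ℝ) :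
    ℕ → (Finset Θ → ℝ) × ℝ
  | 0 => d 0
  | i + 1 => edComb (edCombUpTo d i) (d (i + 1))

/-- The singleton conflict `Σ_{j≠p} m1({H_j})·m2({H_p})`. -/
def singConflict {N : ℕ} (m1 m2 : Finset (Fin N) → ℝ) : ℝ :=
  ∑ j : Fin N, ∑ p : Fin N, if j ≠ p then m1 {j} * m2 {p} else 0

/-- One recursive aggregation step of the original ER algorithm. -/
noncomputable def erStep {N : ℕ} (s : (Fin N → ℝ) × ℝ) (b : Fin N → ℝ) (h : ℝ) : (Fin N → ℝ) × ℝ :=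
  (fun n => (1 - ∑ j : Fin N, ∑ p : Fin N, if p ≠ j then s.1 j * b p else 0)⁻¹ *
      (s.1 n * b n + s.1 n * h + s.2 * b n),
   (1 - ∑ j : Fin N, ∑ p : Fin N, if p ≠ j then s.1 j * b p else 0)⁻¹ * (s.2 * h))

/-- The recursively defined masses of the original ER algorithm. -/
noncomputable def erSeq {N : ℕ} (b : ℕ → Fin N → ℝ) (h : ℕ → ℝ) : ℕ → (Fin N → ℝ) × ℝ
  | 0 => (b 0, h 0)
  | i + 1 => erStep (erSeq b h i) (b (i + 1)) (h (i + 1))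

/-- One recursive aggregation step of the modified ER algorithm, on triples
`(masses on singletons, m̃_H, m̄_H)`. -/
noncomputable def merStep {N : ℕ} (s : (Fin N → ℝ) × ℝ × ℝ) (b : Fin N → ℝ) (tld brd : ℝ) :
    (Fin N → ℝ) × ℝ × ℝ :=
  (fun n => (1 - ∑ j : Fin N, ∑ p : Fin N, if p ≠ j then s.1 j * b p else 0)⁻¹ *
      (s.1 n * b n + s.1 n * (brd + tld) + (s.2.2 + s.2.1) * b n),
   (1 - ∑ j : Fin N, ∑ p : Fin N, if p ≠ j then s.1 j * b p else 0)⁻¹ *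
      (s.2.1 * tld + s.2.1 * brd + s.2.2 * tld),
   (1 - ∑ j : Fin N, ∑ p : Fin N, if p ≠ j then s.1 j * b p else 0)⁻¹ * (s.2.2 * brd))

/-- The recursively defined masses of the modified ER algorithm. -/
noncomputable def merSeq {N : ℕ} (b : ℕ → Fin N → ℝ) (tld brd : ℕ → ℝ) : ℕ → (Fin N → ℝ) × ℝ × ℝ
  | 0 => (b 0, tld 0, brd 0)
  | i + 1 => merStep (merSeq b tld brd i) (b (i + 1)) (tld (i + 1)) (brd (i + 1))

/-- Reliability-importance discounting: the mass-function part `m^{α,β}`. -/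
def riDiscount {Θ : Type*} [Fintype Θ] [DecidableEq Θ] (α β : ℝ) (m : Finset Θ → ℝ) :
    Finset Θ → ℝ :=
  fun A => if A = Finset.univ then α * β * m A + (1 - α) * β else α * β * m A

section Aux

variable {Θ : Type*} [Fintype Θ] [DecidableEq Θ]

lemma conflict_nonneg {m1 m2 : Finset Θ → ℝ} (h1 : ∀ A, 0 ≤ m1 A) (h2 : ∀ A, 0 ≤ m2 A) :
    0 ≤ conflict m1 m2 := by
  refine Finset.sum_nonneg fun B _ => Finset.sum_nonneg fun C _ => ?_
  split
  · exact mul_nonneg (h1 B) (h2 C)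
  · exact le_rfl

lemma edComb_isIBBA {p q : (Finset Θ → ℝ) × ℝ}
    (h1 : IsIBBA p.1 p.2) (h2 : IsIBBA q.1 q.2)
    (hc : conflict p.1 q.1 < 1) :
    IsIBBA (edComb p q).1 (edComb p q).2 := by
  obtain ⟨h1e, h1n, h1w, h1s⟩ := h1
  obtain ⟨h2e, h2n, h2w, h2s⟩ := h2
  have hc0 : 0 ≤ conflict p.1 q.1 := conflict_nonneg h1n h2n
  have hK : 0 < (1 - conflict p.1 q.1)⁻¹ := inv_pos.2 (by linarith)
  set K := (1 - conflict p.1 q.1)⁻¹ with hKdef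
  set T : Finset Θ → ℝ :=
    fun A => ∑ B : Finset Θ, ∑ C : Finset Θ, if B ∩ C = A then p.1 B * q.1 C else 0 with hT
  have hTnn : ∀ A, 0 ≤ T A := by
    intro A
    refine Finset.sum_nonneg fun B _ => Finset.sum_nonneg fun C _ => ?_
    split
    · exact mul_nonneg (h1n B) (h2n C)
    · exact le_rfl
  have hTempty : T ∅ = conflict p.1 q.1 := rfl
  have hTsum : ∑ A : Finset Θ, T A = (∑ B : Finset Θ, p.1 B) * (∑ C : Finset Θ, q.1 C) := by
    rw [hT]
    rw [Finset.sum_comm]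
    rw [Finset.sum_mul]
    refine Finset.sum_congr rfl fun B _ => ?_
    rw [Finset.sum_comm, Finset.mul_sum]
    refine Finset.sum_congr rfl fun C _ => ?_
    exact Finset.sum_ite_eq (Finset.univ : Finset (Finset Θ)) (B ∩ C)
      (fun _ => p.1 B * q.1 C) |>.trans (by simp)
  refine ⟨by simp [edComb], ?_, ?_, ?_⟩
  · intro A
    show (0:ℝ) ≤ if A = ∅ then 0 else K * (T A + p.1 A * q.2 + p.2 * q.1 A)
    split
    · exact le_rfl
    · exact mul_nonneg hK.le (by
        have := hTnn A
        have := mul_nonneg (h1n A) h2w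
        have := mul_nonneg h1w (h2n A)
        linarith)
  · exact mul_nonneg hK.le (mul_nonneg h1w h2w)
  · have key : ∀ A : Finset Θ,
        (edComb p q).1 A
          = K * (T A + p.1 A * q.2 + p.2 * q.1 A)
            - (if A = ∅ then K * conflict p.1 q.1 else 0) := by
      intro A
      show (if A = ∅ then (0:ℝ) else K * (T A + p.1 A * q.2 + p.2 * q.1 A)) = _
      by_cases hA : A = ∅
      · subst hA
        simp [hTempty, h1e, h2e]
      · simp [hA]
    rw [Finset.sum_congr rfl fun A _ => key A]
    rw [Finset.sum_sub_distrib]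
    have h1' : ∑ A : Finset Θ, p.1 A = 1 - p.2 := by linarith
    have h2' : ∑ A : Finset Θ, q.1 A = 1 - q.2 := by linarith
    have hsum1 : ∑ A : Finset Θ, K * (T A + p.1 A * q.2 + p.2 * q.1 A)
        = K * ((1 - p.2) * (1 - q.2) + (1 - p.2) * q.2 + p.2 * (1 - q.2)) := by
      rw [← Finset.mul_sum]
      congr 1
      rw [Finset.sum_add_distrib, Finset.sum_add_distrib, hTsum, h1', h2',
        ← Finset.sum_mul, ← Finset.mul_sum, h1', h2']
    have hsum2 : ∑ A : Finset Θ, (if A = ∅ then K * conflict p.1 q.1 else 0)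
        = K * conflict p.1 q.1 := by simp
    rw [hsum1, hsum2]
    show _ + K * (p.2 * q.2) = 1
    have : K * (1 - conflict p.1 q.1) = 1 := inv_mul_cancel₀ (by linarith)
    nlinarith [this]

lemma edComb_univ_lb {p q : (Finset Θ → ℝ) × ℝ} [Nonempty Θ]
    (h1 : IsIBBA p.1 p.2) (h2 : IsIBBA q.1 q.2)
    (hc : conflict p.1 q.1 < 1) :
    (1 - conflict p.1 q.1)⁻¹ * (p.1 Finset.univ * q.2 + p.2 * q.1 Finset.univ)
      ≤ (edComb p q).1 Finset.univ := by
  obtain ⟨h1e, h1n, h1w, h1s⟩ := h1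
  obtain ⟨h2e, h2n, h2w, h2s⟩ := h2
  have hK : 0 < (1 - conflict p.1 q.1)⁻¹ := inv_pos.2 (by linarith)
  have huniv : (Finset.univ : Finset Θ) ≠ ∅ := Finset.univ_nonempty.ne_empty
  show _ ≤ if (Finset.univ : Finset Θ) = ∅ then (0:ℝ) else _
  rw [if_neg huniv]
  have hTnn : (0:ℝ) ≤ ∑ B : Finset Θ, ∑ C : Finset Θ,
      if B ∩ C = Finset.univ then p.1 B * q.1 C else 0 := by
    refine Finset.sum_nonneg fun B _ => Finset.sum_nonneg fun C _ => ?_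
    split
    · exact mul_nonneg (h1n B) (h2n C)
    · exact le_rfl
  have := mul_le_mul_of_nonneg_left (by linarith :
      p.1 Finset.univ * q.2 + p.2 * q.1 Finset.univ
        ≤ (∑ B : Finset Θ, ∑ C : Finset Θ, if B ∩ C = Finset.univ then p.1 B * q.1 C else 0)
          + p.1 Finset.univ * q.2 + p.2 * q.1 Finset.univ) hK.le
  exact this

lemma assessBBA_props {N : ℕ} (hN : 2 ≤ N) {β : Fin N → ℝ}
    (h0 : ∀ n, 0 ≤ β n) (h1 : ∑ n, β n ≤ 1) :
    IsBBA (assessBBA β) ∧ assessBBA β Finset.univ = 1 - ∑ n, β n := by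
  have hne : Nonempty (Fin N) := ⟨⟨0, by omega⟩⟩
  have hnu : ∀ n : Fin N, (Finset.univ : Finset (Fin N)) ≠ {n} := by
    intro n h
    have := congrArg Finset.card h
    simp [Finset.card_univ] at this
    omega
  have hempty : assessBBA β ∅ = 0 := by
    unfold assessBBA
    rw [if_neg (Ne.symm Finset.univ_nonempty.ne_empty)]
    refine Finset.sum_eq_zero fun n _ => if_neg (Finset.singleton_ne_empty n).symm
  have hnn : ∀ A, 0 ≤ assessBBA β A := by
    intro A
    unfold assessBBA
    split
    · linarith
    · refine Finset.sum_nonneg fun n _ => ?_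
      split
      · exact h0 n
      · exact le_rfl
  have hkey : ∀ A : Finset (Fin N), assessBBA β A
      = (if A = Finset.univ then 1 - ∑ n, β n else 0)
        + ∑ n : Fin N, if A = {n} then β n else 0 := by
    intro A
    unfold assessBBA
    by_cases hA : A = Finset.univ
    · subst hA
      rw [if_pos rfl, if_pos rfl]
      have : (∑ n : Fin N, if (Finset.univ : Finset (Fin N)) = {n} then β n else 0) = 0 :=
        Finset.sum_eq_zero fun n _ => if_neg (hnu n)
      rw [this]; ring
    · rw [if_neg hA, if_neg hA]; ring
  have hsum : ∑ A : Finset (Fin N), assessBBA β A = 1 := by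
    rw [Finset.sum_congr rfl fun A _ => hkey A, Finset.sum_add_distrib]
    rw [Finset.sum_comm]
    simp [Finset.sum_ite_eq']
  have huniv : assessBBA β Finset.univ = 1 - ∑ n, β n := by
    unfold assessBBA
    rw [if_pos rfl]
  exact ⟨⟨hempty, hnn, hsum⟩, huniv⟩

end Aux

/-- the modified ER algorithm (the importance discounting and
combination scheme) satisfies the incompleteness axiom. -/
theorem modifiedER_incompleteness (N L : ℕ) (hN : 2 ≤ N) (hL : 2 ≤ L)
    (β : ℕ → Fin N → ℝ) (w : ℕ → ℝ)
    (hβ : ∀ i < L, ∀ n, 0 ≤ β i n) (hβsum : ∀ i < L, ∑ n, β i n ≤ 1)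
    (hw : ∀ i < L, 0 < w i ∧ w i < 1) (hwsum : ∑ i ∈ Finset.range L, w i = 1)
    -- some assessment is incomplete
    (i0 : ℕ) (hi0 : i0 < L) (hinc : ∑ n, β i0 n < 1)
    (d : ℕ → (Finset (Fin N) → ℝ) × ℝ)
    (hd : ∀ j, d j = impDiscount (w j) (assessBBA (β j)))
    (hconf : ∀ i, i + 1 < L → conflict (edCombUpTo d i).1 (d (i + 1)).1 < 1) :
    (edCombUpTo d (L - 1)).2 < 1 ∧
    0 < (edCombUpTo d (L - 1)).1 Finset.univ / (1 - (edCombUpTo d (L - 1)).2) := by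
  have hne : Nonempty (Fin N) := ⟨⟨0, by omega⟩⟩
  have hdprop : ∀ j < L, IsIBBA (d j).1 (d j).2 ∧ 0 < (d j).2 ∧
      (d j).1 Finset.univ = w j * (1 - ∑ n, β j n) := by
    intro j hj
    obtain ⟨⟨hbe, hbn, hbs⟩, hbu⟩ := assessBBA_props hN (hβ j hj) (hβsum j hj)
    obtain ⟨hw0, hw1⟩ := hw j hj
    rw [hd j]
    refine ⟨⟨?_, ?_, ?_, ?_⟩, ?_, ?_⟩
    · show w j * assessBBA (β j) ∅ = 0
      rw [hbe]; ring
    · intro A; exact mul_nonneg hw0.le (hbn A)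
    · show (0:ℝ) ≤ 1 - w j
      linarith
    · show (∑ A : Finset (Fin N), w j * assessBBA (β j) A) + (1 - w j) = 1
      rw [← Finset.mul_sum, hbs]; ring
    · show (0:ℝ) < 1 - w j
      linarith
    · show w j * assessBBA (β j) Finset.univ = _
      rw [hbu]
  have main : ∀ i, i < L → IsIBBA (edCombUpTo d i).1 (edCombUpTo d i).2 ∧
      0 < (edCombUpTo d i).2 ∧ (i0 ≤ i → 0 < (edCombUpTo d i).1 Finset.univ) := by
    intro i
    induction i with
    | zero =>
      intro h0
      obtain ⟨hI, hω, hu⟩ := hdprop 0 h0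
      refine ⟨hI, hω, fun hle => ?_⟩
      have hi00 : i0 = 0 := Nat.le_zero.mp hle
      have hinc0 : ∑ n, β 0 n < 1 := hi00 ▸ hinc
      show (0:ℝ) < (d 0).1 Finset.univ
      rw [hu]
      exact mul_pos (hw 0 h0).1 (by linarith)
    | succ i ih =>
      intro hi
      have hi' : i < L := by omega
      obtain ⟨hI1, hω1, hu1⟩ := ih hi'
      obtain ⟨hI2, hω2, hu2⟩ := hdprop (i+1) hi
      have hc := hconf i hi
      have hIBBA := edComb_isIBBA hI1 hI2 hc
      refine ⟨hIBBA, ?_, ?_⟩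
      · show (0:ℝ) < (1 - conflict (edCombUpTo d i).1 (d (i+1)).1)⁻¹ *
          ((edCombUpTo d i).2 * (d (i+1)).2)
        exact mul_pos (inv_pos.2 (by linarith)) (mul_pos hω1 hω2)
      · intro hle
        have hlb := edComb_univ_lb hI1 hI2 hc
        have hK : 0 < (1 - conflict (edCombUpTo d i).1 (d (i+1)).1)⁻¹ :=
          inv_pos.2 (by linarith)
        have hnn1 : 0 ≤ (edCombUpTo d i).1 Finset.univ := hI1.2.1 _
        have hnn2 : 0 ≤ (d (i+1)).1 Finset.univ := hI2.2.1 _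
        have hpos : 0 < (1 - conflict (edCombUpTo d i).1 (d (i+1)).1)⁻¹ *
            ((edCombUpTo d i).1 Finset.univ * (d (i+1)).2 +
              (edCombUpTo d i).2 * (d (i+1)).1 Finset.univ) := by
          rcases Nat.lt_or_ge i0 (i+1) with h | h
          · have hmu : 0 < (edCombUpTo d i).1 Finset.univ := hu1 (by omega)
            have h1 : 0 < (edCombUpTo d i).1 Finset.univ * (d (i+1)).2 := mul_pos hmu hω2
            have h2 : 0 ≤ (edCombUpTo d i).2 * (d (i+1)).1 Finset.univ :=
              mul_nonneg hω1.le hnn2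
            exact mul_pos hK (by linarith)
          · have hi0 : i0 = i + 1 := le_antisymm hle h
            have hmu2 : 0 < (d (i+1)).1 Finset.univ := by
              rw [hu2]
              refine mul_pos (hw _ hi).1 ?_
              have : ∑ n, β (i+1) n < 1 := hi0 ▸ hinc
              linarith
            have h1 : 0 ≤ (edCombUpTo d i).1 Finset.univ * (d (i+1)).2 :=
              mul_nonneg hnn1 hω2.le
            have h2 : 0 < (edCombUpTo d i).2 * (d (i+1)).1 Finset.univ := mul_pos hω1 hmu2
            exact mul_pos hK (by linarith)
        exact lt_of_lt_of_le hpos hlb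
  have hL1 : L - 1 < L := by omega
  obtain ⟨⟨he, hn, hωnn, hs⟩, hω, hu⟩ := main (L-1) hL1
  have hmu := hu (by omega)
  have hle : (edCombUpTo d (L-1)).1 Finset.univ ≤ ∑ A : Finset (Fin N), (edCombUpTo d (L-1)).1 A :=
    Finset.single_le_sum (fun A _ => hn A) (Finset.mem_univ _)
  constructor
  · linarith
  · exact div_pos hmu (by linarith)
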